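/- Let Z and X be metric spaces, n a natural number, and let μ denote the n-dimensional Hausdorff measure on each space. Suppose f : Z → X is a surjective 1-Lipschitz map (i.e. dist(f(a), f(b)) ≤ dist(a, b) for all a, b ∈ Z) and μ(Z) = μ(X) < ∞. Then for every Borel measurable set A ⊆ Z one has μ(f(A)) = μ(A), and for every Borel measurable set B ⊆ X one has μ(f⁻¹(B)) = μ(B). -/

import Mathlib

open MeasureTheory

/-- Lemma 1.1: a volume-preserving distance non-increasing surjection between
metric spaces preserves the Hausdorff measure of measurable sets and of their
preimages. -/
theorem volume_preserving_of_lipschitz_surjective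
    {Z X : Type*} [MetricSpace Z] [MeasurableSpace Z] [BorelSpace Z]
    [MetricSpace X] [MeasurableSpace X] [BorelSpace X]
    (n : ℕ) (f : Z → X) (hsurj : Function.Surjective f)
    (hlip : ∀ a b : Z, dist (f a) (f b) ≤ dist a b)
    (heq : μH[(n : ℝ)] (Set.univ : Set Z) = μH[(n : ℝ)] (Set.univ : Set X))
    (hfin : μH[(n : ℝ)] (Set.univ : Set X) < ⊤) :
    (∀ A : Set Z, MeasurableSet A → μH[(n : ℝ)] (f '' A) = μH[(n : ℝ)] A) ∧
    (∀ B : Set X, MeasurableSet B → μH[(n : ℝ)] (f ⁻¹' B) = μH[(n : ℝ)] B) := by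
  have hL : LipschitzWith 1 f := by
    intro a b
    rw [edist_dist, edist_dist, ENNReal.coe_one, one_mul]
    exact ENNReal.ofReal_le_ofReal (hlip a b)
  have himg : ∀ s : Set Z, μH[(n : ℝ)] (f '' s) ≤ μH[(n : ℝ)] s := by
    intro s
    have := hL.hausdorffMeasure_image_le (d := (n : ℝ)) (Nat.cast_nonneg n) s
    simpa using this
  have h1 : ∀ A : Set Z, MeasurableSet A → μH[(n : ℝ)] (f '' A) = μH[(n : ℝ)] A := by
    intro A hA
    refine le_antisymm (himg A) ?_
    -- univ = f '' A ∪ f '' Aᶜ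
    have hcover : (Set.univ : Set X) ⊆ f '' A ∪ f '' Aᶜ := by
      intro x _
      obtain ⟨z, rfl⟩ := hsurj x
      by_cases hz : z ∈ A
      · exact Or.inl ⟨z, hz, rfl⟩
      · exact Or.inr ⟨z, hz, rfl⟩
    have hsub : μH[(n : ℝ)] (Set.univ : Set X) ≤
        μH[(n : ℝ)] (f '' A) + μH[(n : ℝ)] Aᶜ := by
      calc μH[(n : ℝ)] (Set.univ : Set X) ≤ μH[(n : ℝ)] (f '' A ∪ f '' Aᶜ) :=
            measure_mono hcover
        _ ≤ μH[(n : ℝ)] (f '' A) + μH[(n : ℝ)] (f '' Aᶜ) := measure_union_le _ _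
        _ ≤ μH[(n : ℝ)] (f '' A) + μH[(n : ℝ)] Aᶜ := by
            exact add_le_add le_rfl (himg Aᶜ)
    have hsplit : μH[(n : ℝ)] A + μH[(n : ℝ)] Aᶜ = μH[(n : ℝ)] (Set.univ : Set X) := by
      rw [← heq, measure_add_measure_compl hA]
    have hAcfin : μH[(n : ℝ)] Aᶜ ≠ ⊤ := by
      intro h
      rw [h, add_top] at hsplit
      exact hfin.ne hsplit.symm
    have : μH[(n : ℝ)] A + μH[(n : ℝ)] Aᶜ ≤ μH[(n : ℝ)] (f '' A) + μH[(n : ℝ)] Aᶜ :=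
      hsplit ▸ hsub
    exact (ENNReal.add_le_add_iff_right hAcfin).mp this
  refine ⟨h1, ?_⟩
  intro B hB
  have hmB : MeasurableSet (f ⁻¹' B) := (hL.continuous.measurable hB)
  have : f '' (f ⁻¹' B) = B := Set.image_preimage_eq B hsurj
  rw [← h1 (f ⁻¹' B) hmB, this]
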